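/- Let W : ℝⁿ → (0, ∞) satisfy W(x)/|x| → ∞ as |x| → ∞, and let g : ℝⁿ → (0, ∞) be C¹. Define Q_h(g)(x) = inf_{z ∈ ℝⁿ} { g(x − h·z) + h·W(z) } for h > 0. Then for every x ∈ ℝⁿ, lim_{h → 0⁺} (Q_h(g)(x) − g(x))/h = −W*(∇g(x)), where W*(y) = sup_{z}{z·y − W(z)}. -/

import Mathlib

open MeasureTheory RealInnerProductSpace Filter

noncomputable def legendre {n : ℕ} (W : EuclideanSpace ℝ (Fin n) → ℝ)
    (y : EuclideanSpace ℝ (Fin n)) : ℝ :=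
  ⨆ z, (⟪z, y⟫ - W z)

set_option maxHeartbeats 1000000 in
theorem hopf_lax_derivative {n : ℕ}
    (W : EuclideanSpace ℝ (Fin n) → ℝ) (hWpos : ∀ x, 0 < W x)
    (hWsuper : Tendsto (fun x : EuclideanSpace ℝ (Fin n) => W x / ‖x‖)
      (cocompact _) atTop)
    (g : EuclideanSpace ℝ (Fin n) → ℝ) (hgpos : ∀ x, 0 < g x)
    (hg : ContDiff ℝ 1 g) (x : EuclideanSpace ℝ (Fin n)) :
    Tendsto (fun h : ℝ => ((⨅ z, (g (x - h • z) + h * W z)) - g x) / h)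
      (nhdsWithin 0 (Set.Ioi 0)) (nhds (-(legendre W (gradient g x)))) := by
  set y := gradient g x with hy
  have hgd : DifferentiableAt ℝ g x := (hg.differentiable one_ne_zero).differentiableAt
  have hf' : ∀ z : EuclideanSpace ℝ (Fin n), fderiv ℝ g x z = ⟪y, z⟫ := by
    intro z
    rw [hy, gradient, ← InnerProductSpace.toDual_apply_apply,
      LinearIsometryEquiv.apply_symm_apply]
  -- superlinearity extraction
  have hsup : ∀ C : ℝ, ∃ R : ℝ, 1 ≤ R ∧
      ∀ z : EuclideanSpace ℝ (Fin n), R ≤ ‖z‖ → C * ‖z‖ ≤ W z := by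
    intro C
    have h1 : ∀ᶠ z : EuclideanSpace ℝ (Fin n) in cocompact _, C ≤ W z / ‖z‖ :=
      hWsuper.eventually (eventually_ge_atTop C)
    have h2 : ∀ᶠ z : EuclideanSpace ℝ (Fin n) in Filter.comap norm atTop,
        C ≤ W z / ‖z‖ := by
      rw [comap_norm_atTop]; exact Metric.cobounded_le_cocompact h1
    rw [eventually_comap, eventually_atTop] at h2
    obtain ⟨R, hR⟩ := h2
    refine ⟨max R 1, le_max_right _ _, fun z hz => ?_⟩
    have hz1 : (1:ℝ) ≤ ‖z‖ := le_trans (le_max_right _ _) hz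
    have hcz := hR ‖z‖ (le_trans (le_max_left _ _) hz) z rfl
    calc C * ‖z‖ ≤ (W z / ‖z‖) * ‖z‖ :=
          mul_le_mul_of_nonneg_right hcz (norm_nonneg z)
      _ = W z := div_mul_cancel₀ _ (by linarith)
  -- boundedness of the Legendre sup
  obtain ⟨R₀, hR₀1, hR₀⟩ := hsup (‖y‖ + 1)
  have hbdd : BddAbove (Set.range fun z : EuclideanSpace ℝ (Fin n) =>
      ⟪z, y⟫ - W z) := by
    refine ⟨R₀ * ‖y‖, ?_⟩
    rintro _ ⟨z, rfl⟩
    show ⟪z, y⟫ - W z ≤ R₀ * ‖y‖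
    have hiz : ⟪z, y⟫ ≤ ‖z‖ * ‖y‖ := real_inner_le_norm z y
    rcases le_or_gt ‖z‖ R₀ with hcc | hcc
    · have := (hWpos z).le
      nlinarith [norm_nonneg y]
    · have hw := hR₀ z hcc.le
      nlinarith [norm_nonneg y, norm_nonneg z]
  set S := legendre W y with hS
  have hle : ∀ z : EuclideanSpace ℝ (Fin n), ⟪z, y⟫ - W z ≤ S := fun z =>
    le_ciSup hbdd z
  set c := -S with hc
  -- slope limits
  have hslope : ∀ z : EuclideanSpace ℝ (Fin n),
      Tendsto (fun h : ℝ => (g (x - h • z) - g x) / h)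
      (nhdsWithin 0 (Set.Ioi 0)) (nhds (-⟪y, z⟫)) := by
    intro z
    have hψ : HasDerivAt (fun h : ℝ => x - h • z) (-z) 0 := by
      have h1 : HasDerivAt (fun h : ℝ => h • z) ((1:ℝ) • z) 0 :=
        (hasDerivAt_id 0).smul_const z
      simpa using (h1.const_sub x)
    have hcomp : HasDerivAt (fun h : ℝ => g (x - h • z)) (fderiv ℝ g x (-z)) 0 :=
      HasFDerivAt.comp_hasDerivAt 0
        (by simpa using hgd.hasFDerivAt :
          HasFDerivAt g (fderiv ℝ g x) (x - (0:ℝ) • z)) hψ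
    have hval : fderiv ℝ g x (-z) = -⟪y, z⟫ := by rw [map_neg, hf']
    rw [hval] at hcomp
    have h2 := (hasDerivAt_iff_tendsto_slope.1 hcomp).mono_left
      (nhdsWithin_mono 0 (fun t ht => ne_of_gt ht : Set.Ioi (0:ℝ) ⊆ {(0:ℝ)}ᶜ))
    refine h2.congr (fun h => ?_)
    simp [slope_def_field, sub_zero]
  -- Lipschitz bound on unit ball
  obtain ⟨L₀, hL₀⟩ := (isCompact_closedBall x 1).exists_bound_of_continuousOn
    ((hg.continuous_fderiv one_ne_zero).norm.continuousOn)
  set L := max L₀ 0 with hL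
  have hLnn : 0 ≤ L := le_max_right _ _
  have hlip : ∀ u : EuclideanSpace ℝ (Fin n), ‖u‖ ≤ 1 →
      ‖g (x - u) - g x‖ ≤ L * ‖u‖ := by
    intro u hu
    have hxmem : x ∈ Metric.closedBall x 1 := Metric.mem_closedBall_self zero_le_one
    have humem : x - u ∈ Metric.closedBall x 1 := by
      simpa [Metric.mem_closedBall, dist_eq_norm] using hu
    have := (convex_closedBall x 1).norm_image_sub_le_of_norm_fderiv_le
      (C := L) (fun w _ => (hg.differentiable one_ne_zero).differentiableAt)
      (fun w hw => le_trans (by simpa using hL₀ w hw) (le_max_left _ _)) hxmem humem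
    simpa using this
  rw [Metric.tendsto_nhds]
  intro ε hε
  set ε' := ε / 2 with hε'
  have hε'pos : 0 < ε' := by positivity
  -- choose radius R for the lower bound
  obtain ⟨R, hR1, hRs⟩ := hsup (L + 1 + g x + |c|)
  have hRpos : (0:ℝ) < R := by linarith
  -- little-o at x with ε'/R
  have hlo := (hgd.hasFDerivAt.isLittleO).def (show (0:ℝ) < ε' / R by positivity)
  rw [Metric.eventually_nhds_iff] at hlo
  obtain ⟨δ, hδpos, hδ⟩ := hlo
  -- the lower bound, for all small h and all z
  have hmain : ∀ h : ℝ, 0 < h → h < δ / R → h ≤ 1 →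
      ∀ z : EuclideanSpace ℝ (Fin n),
        g x + h * (c - ε') ≤ g (x - h • z) + h * W z := by
    intro h hh hhδ hh1 z
    rcases le_or_gt ‖z‖ R with hzR | hzR
    · -- case A
      have hdist : dist (x - h • z) x < δ := by
        rw [dist_eq_norm]
        simp only [sub_sub_cancel_left, norm_neg, norm_smul, Real.norm_eq_abs,
          abs_of_pos hh]
        calc h * ‖z‖ ≤ h * R := by nlinarith
          _ < δ := by
            rw [lt_div_iff₀ hRpos] at hhδ
            linarith
      have hkey := hδ hdist
      have hlin : fderiv ℝ g x ((x - h • z) - x) = -(h * ⟪y, z⟫) := by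
        have e : (x - h • z) - x = -(h • z) := by abel
        rw [e, map_neg, ContinuousLinearMap.map_smul, hf']
        simp
      have hnorm : ‖(x - h • z) - x‖ = h * ‖z‖ := by
        rw [sub_sub_cancel_left, norm_neg, norm_smul, Real.norm_eq_abs,
          abs_of_pos hh]
      rw [hlin, hnorm, Real.norm_eq_abs, abs_le] at hkey
      have h1 : g (x - h • z) - g x ≥ -(h * ⟪y, z⟫) - (ε' / R) * (h * ‖z‖) := by
        linarith [hkey.1]
      have h2 : (ε' / R) * (h * ‖z‖) ≤ ε' * h := by
        rw [div_mul_eq_mul_div, div_le_iff₀ hRpos]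
        nlinarith [mul_le_mul_of_nonneg_left hzR (mul_nonneg hε'pos.le hh.le)]
      have h3 : ⟪z, y⟫ - W z ≤ S := hle z
      have h4 : ⟪y, z⟫ = ⟪z, y⟫ := real_inner_comm z y
      rw [h4] at h1
      nlinarith [mul_le_mul_of_nonneg_left h3 hh.le, h1, h2]
    · -- case B
      have hWz := hRs z hzR.le
      have hgx := (hgpos x).le
      have habs := abs_nonneg c
      have hC0 : (0:ℝ) ≤ L + 1 + g x + |c| := by linarith
      rcases le_or_gt (h * ‖z‖) 1 with hhz | hhz
      · -- B1 : use Lipschitz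
        have hlz : ‖h • z‖ ≤ 1 := by
          rw [norm_smul, Real.norm_eq_abs, abs_of_pos hh]; exact hhz
        have hl := hlip (h • z) hlz
        simp only [norm_smul, Real.norm_eq_abs, abs_of_pos hh] at hl
        rw [abs_le] at hl
        have h1 : g (x - h • z) - g x ≥ -(L * (h * ‖z‖)) := by linarith [hl.1]
        have hzn : (1:ℝ) ≤ ‖z‖ := le_trans hR1 hzR.le
        have s1 : h * ((L + 1 + g x + |c|) * ‖z‖) ≤ h * W z :=
          mul_le_mul_of_nonneg_left hWz hh.le
        have s2 : h * (1 + g x + |c|) * 1 ≤ h * (1 + g x + |c|) * ‖z‖ :=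
          mul_le_mul_of_nonneg_left hzn (by nlinarith)
        have s3 : h * (c - ε') ≤ h * (1 + g x + |c|) :=
          mul_le_mul_of_nonneg_left (by nlinarith [le_abs_self c]) hh.le
        nlinarith [s1, s2, s3, h1]
      · -- B2 : far away, use positivity of g
        have h1 : (0:ℝ) ≤ g (x - h • z) := (hgpos _).le
        have s1 : h * ((L + 1 + g x + |c|) * ‖z‖) ≤ h * W z :=
          mul_le_mul_of_nonneg_left hWz hh.le
        have s2 : (L + 1 + g x + |c|) * 1 ≤ (L + 1 + g x + |c|) * (h * ‖z‖) :=
          mul_le_mul_of_nonneg_left hhz.le hC0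
        have s3 : h * (c - ε') ≤ |c| := by
          calc h * (c - ε') ≤ h * |c| :=
                mul_le_mul_of_nonneg_left (by linarith [le_abs_self c]) hh.le
            _ ≤ 1 * |c| := mul_le_mul_of_nonneg_right hh1 habs
            _ = |c| := one_mul _
        nlinarith [s1, s2, s3, h1, hLnn]
  -- upper bound witness
  have hz₀ : ∃ z₀ : EuclideanSpace ℝ (Fin n), S - ε' < ⟪z₀, y⟫ - W z₀ := by
    apply exists_lt_of_lt_ciSup
    show S - ε' < ⨆ z : EuclideanSpace ℝ (Fin n), (⟪z, y⟫ - W z)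
    have : (⨆ z : EuclideanSpace ℝ (Fin n), (⟪z, y⟫ - W z)) = S := by
      rw [hS]; rfl
    rw [this]
    linarith
  obtain ⟨z₀, hz₀⟩ := hz₀
  have hd : -⟪y, z₀⟫ + W z₀ < c + ε' := by
    rw [real_inner_comm]; rw [hc]; linarith
  have ev1 : ∀ᶠ h : ℝ in nhdsWithin 0 (Set.Ioi 0),
      (g (x - h • z₀) - g x) / h + W z₀ < c + ε' :=
    ((hslope z₀).add_const (W z₀)).eventually_lt_const hd
  have hmin : (0:ℝ) < min (δ / R) 1 := lt_min (by positivity) one_pos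
  have ev2 : Set.Ioo (0:ℝ) (min (δ / R) 1) ∈ nhdsWithin (0:ℝ) (Set.Ioi 0) :=
    Ioo_mem_nhdsGT_of_mem ⟨le_refl 0, hmin⟩
  filter_upwards [ev1, ev2] with h h1 h2
  obtain ⟨hh, hup⟩ := h2
  have hhδ : h < δ / R := lt_of_lt_of_le hup (min_le_left _ _)
  have hh1 : h ≤ 1 := le_of_lt (lt_of_lt_of_le hup (min_le_right _ _))
  have hlow := hmain h hh hhδ hh1
  have hbb : BddBelow (Set.range fun z : EuclideanSpace ℝ (Fin n) =>
      g (x - h • z) + h * W z) := by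
    refine ⟨g x + h * (c - ε'), ?_⟩
    rintro _ ⟨z, rfl⟩
    exact hlow z
  have hinf_ge : g x + h * (c - ε') ≤ ⨅ z, (g (x - h • z) + h * W z) :=
    le_ciInf hlow
  have hinf_le : (⨅ z, (g (x - h • z) + h * W z)) ≤ g (x - h • z₀) + h * W z₀ :=
    ciInf_le hbb z₀
  have hlower : c - ε' ≤ ((⨅ z, (g (x - h • z) + h * W z)) - g x) / h := by
    rw [le_div_iff₀ hh]
    nlinarith [hinf_ge]
  have hupper : ((⨅ z, (g (x - h • z) + h * W z)) - g x) / h < c + ε' := by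
    have e : (g (x - h • z₀) - g x) / h + W z₀
        = ((g (x - h • z₀) + h * W z₀) - g x) / h := by
      field_simp
      ring
    rw [e] at h1
    calc ((⨅ z, (g (x - h • z) + h * W z)) - g x) / h
        ≤ ((g (x - h • z₀) + h * W z₀) - g x) / h := by
          gcongr
      _ < c + ε' := h1
  rw [Real.dist_eq, abs_lt]
  constructor <;> [skip; skip] <;> nlinarith [hlower, hupper]
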